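/- arXiv:1709.06212 — 4 statements merged into one kernel-verified Lean document; each statement's English description precedes it below -/
import Mathlib

section
/- For integers 1 ≤ k < N, ψ(k) − ψ(N) = ((N−1)!/((k−1)!(N−k−1)!)) ∫₀¹ (log t) t^{k−1} (1−t)^{N−k−1} dt, where ψ is the digamma function. -/
open Finset intervalIntegral

/-- The digamma function at a positive integer:
`ψ(n) = -γ + ∑_{j=1}^{n-1} 1/j`. -/
noncomputable def digamma (n : ℕ) : ℝ :=
  -Real.eulerMascheroniConstant + ∑ j ∈ Finset.range (n - 1), (1 : ℝ) / (j + 1)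

noncomputable def Saux (m n : ℕ) : ℝ := ∑ i ∈ Finset.range (n + 1), (1 : ℝ) / (m + i + 1)

lemma intInt_log : IntervalIntegrable Real.log MeasureTheory.volume 0 1 := by
  have h : MeasureTheory.IntegrableOn (fun t : ℝ => -Real.log t) (Set.Ioc (0:ℝ) 1) := by
    apply intervalIntegral.integrableOn_deriv_of_nonneg
      (g := fun t : ℝ => t - t * Real.log t)
    · exact (continuous_id.sub Real.continuous_mul_log).continuousOn
    · intro x hx
      have h1 : HasDerivAt (fun t : ℝ => t - t * Real.log t) (1 - (Real.log x + 1)) x :=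
        (hasDerivAt_id x).sub (Real.hasDerivAt_mul_log hx.1.ne')
      convert h1 using 1; ring
    · intro x hx
      simpa using Real.log_nonpos hx.1.le hx.2.le
  rw [intervalIntegrable_iff_integrableOn_Ioc_of_le zero_le_one]
  have h2 := h.neg
  have h3 : (-(fun t : ℝ => -Real.log t)) = Real.log := by funext t; simp
  exact h3 ▸ h2

lemma intInt_f (m n : ℕ) :
    IntervalIntegrable (fun t : ℝ => Real.log t * t ^ m * (1 - t) ^ n)
      MeasureTheory.volume 0 1 := by
  apply intInt_log.mono_fun
  · exact ((Real.measurable_log.mul (measurable_id.pow_const m)).mul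
      ((measurable_const.sub measurable_id).pow_const n)).aestronglyMeasurable
  · rw [Set.uIoc_of_le zero_le_one]
    filter_upwards [MeasureTheory.ae_restrict_mem measurableSet_Ioc] with t ht
    have h0 : (0:ℝ) ≤ t := ht.1.le
    have h1 : t ≤ 1 := ht.2
    simp only [Real.norm_eq_abs, abs_mul]
    have hp1 : |t ^ m| ≤ 1 := by
      rw [abs_pow, abs_of_nonneg h0]
      exact pow_le_one₀ h0 h1
    have hp2 : |(1 - t) ^ n| ≤ 1 := by
      rw [abs_pow, abs_of_nonneg (by linarith)]
      exact pow_le_one₀ (by linarith) (by linarith)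
    calc |Real.log t| * |t ^ m| * |(1 - t) ^ n|
        ≤ |Real.log t| * 1 * 1 := by
          gcongr <;> positivity
      _ = |Real.log t| := by ring

lemma base_integral (m : ℕ) :
    ∫ t in (0:ℝ)..1, Real.log t * t ^ m = -1 / ((m : ℝ) + 1) ^ 2 := by
  set F : ℝ → ℝ := fun t => t ^ (m + 1) * Real.log t / ((m : ℝ) + 1)
      - t ^ (m + 1) / ((m : ℝ) + 1) ^ 2 with hF
  have hm1 : ((m : ℝ) + 1) ≠ 0 := by positivity
  have hcont : Continuous F := by
    have he : (fun t : ℝ => t ^ (m + 1) * Real.log t)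
        = fun t : ℝ => t ^ m * (t * Real.log t) := by
      funext t; ring
    apply Continuous.sub
    · exact (he ▸ (show Continuous (fun t : ℝ => t ^ m * (t * Real.log t)) from
        (continuous_pow m).mul Real.continuous_mul_log)).div_const _
    · exact (continuous_pow (m + 1)).div_const _
  have hderiv : ∀ x ∈ Set.Ioo (0:ℝ) 1, HasDerivAt F (Real.log x * x ^ m) x := by
    intro x hx
    have hx0 : x ≠ 0 := hx.1.ne'
    have h1 : HasDerivAt (fun t : ℝ => t ^ (m + 1)) (((m : ℝ) + 1) * x ^ m) x := by
      simpa using hasDerivAt_pow (m + 1) x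
    have h2 : HasDerivAt Real.log x⁻¹ x := Real.hasDerivAt_log hx0
    have h3 := ((h1.mul h2).div_const ((m : ℝ) + 1)).sub (h1.div_const (((m : ℝ) + 1) ^ 2))
    have hxp : x ^ (m + 1) * x⁻¹ = x ^ m := by
      rw [pow_succ]
      field_simp
    convert h3 using 1
    · rfl
    · rfl
    · rfl
    rw [hxp]
    field_simp
    ring
  have key := intervalIntegral.integral_eq_sub_of_hasDeriv_right_of_le zero_le_one
    hcont.continuousOn (fun x hx => (hderiv x hx).hasDerivWithinAt)
    (by simpa using intInt_f m 0)
  rw [key, hF]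
  norm_num [Real.log_one]
  ring

lemma Saux_succ (m n : ℕ) : Saux m (n + 1) = Saux m n + 1 / ((m : ℝ) + n + 2) := by
  rw [Saux, Saux, Finset.sum_range_succ]
  congr 1
  push_cast
  ring

lemma Saux_shift (m n : ℕ) : Saux m (n + 1) = 1 / ((m : ℝ) + 1) + Saux (m + 1) n := by
  rw [Saux, Saux, Finset.sum_range_succ']
  rw [add_comm]
  congr 1
  · norm_num
  · apply Finset.sum_congr rfl
    intro i _
    push_cast
    ring

lemma key_lemma : ∀ n m : ℕ, (∫ t in (0:ℝ)..1, Real.log t * t ^ m * (1 - t) ^ n)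
    = -((m.factorial * n.factorial : ℝ) / ((m + n + 1).factorial : ℝ)) * Saux m n := by
  intro n
  induction n with
  | zero =>
      intro m
      have h1 : (∫ t in (0:ℝ)..1, Real.log t * t ^ m * (1 - t) ^ 0)
          = ∫ t in (0:ℝ)..1, Real.log t * t ^ m := by
        apply intervalIntegral.integral_congr; intro t _; ring
      rw [h1, base_integral m]
      have h2 : Saux m 0 = 1 / ((m : ℝ) + 1) := by
        rw [Saux]; norm_num
      rw [h2]
      rw [Nat.factorial_succ]
      have hm1 : ((m : ℝ) + 1) ≠ 0 := by positivity
      have hmf : ((m.factorial : ℝ)) ≠ 0 := Nat.cast_ne_zero.2 m.factorial_ne_zero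
      push_cast
      field_simp
      ring
  | succ n ih =>
      intro m
      have hsplit : (∫ t in (0:ℝ)..1, Real.log t * t ^ m * (1 - t) ^ (n + 1))
          = (∫ t in (0:ℝ)..1, Real.log t * t ^ m * (1 - t) ^ n)
            - ∫ t in (0:ℝ)..1, Real.log t * t ^ (m + 1) * (1 - t) ^ n := by
        rw [← intervalIntegral.integral_sub (intInt_f m n) (intInt_f (m + 1) n)]
        apply intervalIntegral.integral_congr
        intro t _
        ring
      rw [hsplit, ih m, ih (m + 1)]
      have e1 : m + 1 + n + 1 = m + n + 2 := by omega
      have e2 : m + (n + 1) + 1 = m + n + 2 := by omega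
      rw [e1, e2]
      have hf2 : ((m + n + 2).factorial : ℝ)
          = ((m : ℝ) + n + 2) * ((m + n + 1).factorial : ℝ) := by
        have : m + n + 2 = (m + n + 1) + 1 := by omega
        rw [this, Nat.factorial_succ]
        push_cast
        ring
      have hfm : ((m + 1).factorial : ℝ) = ((m : ℝ) + 1) * (m.factorial : ℝ) := by
        rw [Nat.factorial_succ]; push_cast; ring
      have hfn : ((n + 1).factorial : ℝ) = ((n : ℝ) + 1) * (n.factorial : ℝ) := by
        rw [Nat.factorial_succ]; push_cast; ring
      have hS1 : Saux m (n + 1) = Saux m n + 1 / ((m : ℝ) + n + 2) := Saux_succ m n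
      have hS2 : Saux (m + 1) n = Saux m n + 1 / ((m : ℝ) + n + 2) - 1 / ((m : ℝ) + 1) := by
        have := Saux_shift m n
        rw [hS1] at this
        linarith
      rw [hf2, hfm, hfn, hS1, hS2]
      have hm1 : ((m : ℝ) + 1) ≠ 0 := by positivity
      have hmn2 : ((m : ℝ) + n + 2) ≠ 0 := by positivity
      have hmf : ((m.factorial : ℝ)) ≠ 0 := Nat.cast_ne_zero.2 m.factorial_ne_zero
      have hnf : ((n.factorial : ℝ)) ≠ 0 := Nat.cast_ne_zero.2 n.factorial_ne_zero
      have hpf : (((m + n + 1).factorial : ℝ)) ≠ 0 :=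
        Nat.cast_ne_zero.2 (m + n + 1).factorial_ne_zero
      field_simp
      ring

theorem digamma_diff_eq_beta_log_integral (k N : ℕ) (hk : 1 ≤ k) (hkN : k < N) :
    digamma k - digamma N =
      ((Nat.factorial (N - 1) : ℝ) /
          ((Nat.factorial (k - 1) : ℝ) * (Nat.factorial (N - k - 1) : ℝ))) *
        ∫ t in (0:ℝ)..1, Real.log t * t ^ (k - 1) * (1 - t) ^ (N - k - 1) := by
  set m := k - 1 with hm
  set n := N - k - 1 with hn
  have hN1 : N - 1 = m + n + 1 := by omega
  have hsum : digamma k - digamma N = -Saux m n := by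
    rw [digamma, digamma, hN1]
    have hk1 : k - 1 = m := rfl
    rw [hk1]
    have hle : m ≤ m + n + 1 := by omega
    rw [← Finset.sum_range_add_sum_Ico _ hle]
    have : (∑ j ∈ Finset.Ico m (m + n + 1), (1 : ℝ) / (j + 1)) = Saux m n := by
      rw [Finset.sum_Ico_eq_sum_range]
      have h1 : m + n + 1 - m = n + 1 := by omega
      rw [h1, Saux]
      apply Finset.sum_congr rfl
      intro i _
      push_cast
      ring_nf
    rw [this]
    ring
  rw [hsum, hN1, key_lemma n m]
  have hmf : ((m.factorial : ℝ)) ≠ 0 := Nat.cast_ne_zero.2 m.factorial_ne_zero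
  have hnf : ((n.factorial : ℝ)) ≠ 0 := Nat.cast_ne_zero.2 n.factorial_ne_zero
  have hpf : (((m + n + 1).factorial : ℝ)) ≠ 0 :=
    Nat.cast_ne_zero.2 (m + n + 1).factorial_ne_zero
  field_simp
end

section
/- Let X ~ Binomial(N, p) and let m ≥ 1 be an integer with Np ≥ m and N ≥ 4. Then log(Np + m) − E[log(X + m)] ≤ 5/(2(Np + m)). -/
open Finset

lemma sum_w (p : ℝ) (n : ℕ) :
    ∑ j ∈ range (n+1), (n.choose j : ℝ) * p ^ j * (1-p) ^ (n-j) = 1 := by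
  have h := add_pow p (1-p) n
  simp only [add_sub_cancel, one_pow] at h
  have h2 : ∑ j ∈ range (n+1), (n.choose j:ℝ) * p^j*(1-p)^(n-j)
      = ∑ j ∈ range (n+1), p^j*(1-p)^(n-j)*(n.choose j:ℝ) :=
    Finset.sum_congr rfl (fun j _ => by ring)
  rw [h2, ← h]

lemma sum_jw (p : ℝ) (n : ℕ) :
    ∑ j ∈ range (n+1), (j:ℝ) * ((n.choose j : ℝ) * p ^ j * (1-p) ^ (n-j)) = n * p := by
  cases n with
  | zero => simp
  | succ m =>
    rw [Finset.sum_range_succ']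
    simp only [Nat.cast_zero, zero_mul, add_zero]
    have key : ∀ k ∈ range (m+1),
        ((k+1 : ℕ):ℝ) * (((m+1).choose (k+1) : ℝ) * p^(k+1) * (1-p)^(m+1-(k+1)))
        = ((m:ℝ)+1) * p * ((m.choose k : ℝ) * p^k * (1-p)^(m-k)) := by
      intro k hk
      have hc : (m+1) * m.choose k = (m+1).choose (k+1) * (k+1) := Nat.add_one_mul_choose_eq m k
      have hc' : ((m:ℝ)+1) * (m.choose k:ℝ) = ((m+1).choose (k+1):ℝ) * ((k:ℝ)+1) := by
        exact_mod_cast hc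
      have hs : m + 1 - (k+1) = m - k := by omega
      rw [hs]
      push_cast
      linear_combination (-(p^k * p * (1-p)^(m-k))) * hc'
    rw [Finset.sum_congr rfl key, ← Finset.mul_sum, sum_w]
    push_cast
    ring

lemma sum_jjw (p : ℝ) (n : ℕ) :
    ∑ j ∈ range (n+1), (j:ℝ)*((j:ℝ)-1) * ((n.choose j : ℝ) * p ^ j * (1-p) ^ (n-j))
      = (n:ℝ)*((n:ℝ)-1)*p^2 := by
  cases n with
  | zero => simp
  | succ m =>
    rw [Finset.sum_range_succ']
    simp only [Nat.cast_zero, zero_mul, add_zero]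
    have key : ∀ k ∈ range (m+1),
        ((k+1 : ℕ):ℝ) * (((k+1:ℕ):ℝ)-1) * (((m+1).choose (k+1) : ℝ) * p^(k+1) * (1-p)^(m+1-(k+1)))
        = ((m:ℝ)+1) * p * ((k:ℝ) * ((m.choose k : ℝ) * p^k * (1-p)^(m-k))) := by
      intro k hk
      have hc : (m+1) * m.choose k = (m+1).choose (k+1) * (k+1) := Nat.add_one_mul_choose_eq m k
      have hc' : ((m:ℝ)+1) * (m.choose k:ℝ) = ((m+1).choose (k+1):ℝ) * ((k:ℝ)+1) := by
        exact_mod_cast hc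
      have hs : m + 1 - (k+1) = m - k := by omega
      rw [hs]
      push_cast
      linear_combination (-((k:ℝ) * p^k * p * (1-p)^(m-k))) * hc'
    rw [Finset.sum_congr rfl key, ← Finset.mul_sum, sum_jw]
    push_cast
    ring

lemma sum_sqw (p c : ℝ) (n : ℕ) :
    ∑ j ∈ range (n+1), ((j:ℝ) - c)^2 * ((n.choose j : ℝ) * p ^ j * (1-p) ^ (n-j))
      = n*p*(1-p) + ((n:ℝ)*p - c)^2 := by
  have e : ∀ j ∈ range (n+1), ((j:ℝ) - c)^2 * ((n.choose j : ℝ) * p ^ j * (1-p) ^ (n-j))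
      = (j:ℝ)*((j:ℝ)-1)*((n.choose j : ℝ) * p ^ j * (1-p) ^ (n-j))
        + (1-2*c)*((j:ℝ)*((n.choose j : ℝ) * p ^ j * (1-p) ^ (n-j)))
        + (c^2)*((n.choose j : ℝ) * p ^ j * (1-p) ^ (n-j)) := fun j _ => by ring
  rw [Finset.sum_congr rfl e, Finset.sum_add_distrib, Finset.sum_add_distrib,
    ← Finset.mul_sum, ← Finset.mul_sum, sum_jjw, sum_jw, sum_w]
  ring

lemma sum_ratio (p : ℝ) (N : ℕ) (hp0 : 0 < p) (hp1 : p ≤ 1) (h1 : 1 ≤ (N:ℝ)*p) :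
    ∑ j ∈ range (N+1), ((j:ℝ) - (N:ℝ)*p)^2 / ((j:ℝ)+1)
        * ((N.choose j : ℝ) * p^j * (1-p)^(N-j)) ≤ 2 := by
  set q := 1 - p with hq
  have hq0 : 0 ≤ q := by simp [hq]; linarith
  have hN1 : (0:ℝ) < ((N:ℝ)+1)*p := by positivity
  have key : ∀ j ∈ range (N+1),
      ((j:ℝ) - (N:ℝ)*p)^2 / ((j:ℝ)+1) * ((N.choose j : ℝ) * p^j * q^(N-j))
      = (1/(((N:ℝ)+1)*p)) *
        ((((j+1:ℕ):ℝ) - ((N:ℝ)*p+1))^2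
          * (((N+1).choose (j+1) : ℝ) * p^(j+1) * q^((N+1)-(j+1)))) := by
    intro j hj
    have hs : N + 1 - (j+1) = N - j := by omega
    have hc' : ((N:ℝ)+1) * (N.choose j:ℝ) = ((N+1).choose (j+1):ℝ) * ((j:ℝ)+1) := by
      exact_mod_cast Nat.add_one_mul_choose_eq N j
    have hj1 : ((j:ℝ)+1) ≠ 0 := by positivity
    rw [hs]
    push_cast
    field_simp
    linear_combination (((j:ℝ) - (N:ℝ)*p)^2 * p^j * p * q^(N-j)) * hc'
  rw [Finset.sum_congr rfl key, ← Finset.mul_sum]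
  have hshift : ∑ j ∈ range (N+1),
      (((j+1:ℕ):ℝ) - ((N:ℝ)*p+1))^2 * (((N+1).choose (j+1) : ℝ) * p^(j+1) * q^((N+1)-(j+1)))
      ≤ ∑ k ∈ range (N+2),
      (((k:ℕ):ℝ) - ((N:ℝ)*p+1))^2 * (((N+1).choose k : ℝ) * p^k * q^((N+1)-k)) := by
    rw [Finset.sum_range_succ' (fun k => (((k:ℕ):ℝ) - ((N:ℝ)*p+1))^2
      * (((N+1).choose k : ℝ) * p^k * q^((N+1)-k))) (N+1)]
    have h0 : 0 ≤ (((0:ℕ):ℝ) - ((N:ℝ)*p+1))^2 * (((N+1).choose 0 : ℝ) * p^0 * q^((N+1)-0)) := by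
      positivity
    linarith
  have hval := sum_sqw p ((N:ℝ)*p+1) (N+1)
  push_cast at hval
  rw [hval] at hshift
  have hb : (((N:ℝ)+1)*p*q + (((N:ℝ)+1)*p - ((N:ℝ)*p+1))^2) ≤ 2 * (((N:ℝ)+1)*p) := by
    have hq1 : q ≤ 1 := by simp [hq]; linarith
    have h2 : ((N:ℝ)+1)*p - ((N:ℝ)*p+1) = -q := by simp [hq]; ring
    rw [h2]
    nlinarith [hN1, hq0, hq1, h1]
  calc 1/(((N:ℝ)+1)*p) * ∑ j ∈ range (N+1),
        (((j+1:ℕ):ℝ) - ((N:ℝ)*p+1))^2 * (((N+1).choose (j+1) : ℝ) * p^(j+1) * q^((N+1)-(j+1)))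
      ≤ 1/(((N:ℝ)+1)*p) * ((((N:ℝ)+1)*p*q + (((N:ℝ)+1)*p - ((N:ℝ)*p+1))^2)) := by
        apply mul_le_mul_of_nonneg_left hshift (by positivity)
    _ ≤ 2 := by
        rw [div_mul_eq_mul_div, one_mul, div_le_iff₀ hN1]
        linarith [hb]

lemma log_lb_ge_one {t : ℝ} (ht : 1 ≤ t) :
    (t - 1) - (t - 1)^2 / 2 ≤ Real.log t := by
  set g : ℝ → ℝ := fun x => Real.log x - (x-1) + (x-1)^2/2 with hg
  have hder : ∀ x ∈ Set.Ioi (1:ℝ), HasDerivAt g ((x-1)^2/x) x := by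
    intro x hx
    have hx0 : x ≠ 0 := by simp at hx; linarith
    have h1 : HasDerivAt g (x⁻¹ - 1 + (↑2 * (x-1)^(2-1) * 1)/2) x :=
      (((Real.hasDerivAt_log hx0).sub ((hasDerivAt_id x).sub_const 1)).add
        ((((hasDerivAt_id x).sub_const 1).pow 2).div_const 2))
    convert h1 using 1
    have : x⁻¹ = 1/x := by rw [one_div]
    field_simp
    ring
  have hmono : MonotoneOn g (Set.Ici (1:ℝ)) := by
    apply monotoneOn_of_deriv_nonneg (convex_Ici 1)
    · intro x hx
      have hx0 : x ≠ 0 := by simp at hx; linarith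
      exact (ContinuousAt.add (ContinuousAt.sub (Real.continuousAt_log hx0) (by fun_prop))
        (by fun_prop)).continuousWithinAt
    · intro x hx
      rw [interior_Ici] at hx
      exact (hder x hx).differentiableAt.differentiableWithinAt
    · intro x hx
      rw [interior_Ici] at hx
      rw [(hder x hx).deriv]
      have : 0 < x := by simp at hx; linarith
      positivity
  have h1 : g 1 ≤ g t := hmono (by simp) (by simpa using ht) ht
  simp [hg] at h1 ⊢
  linarith

lemma log_lb_le_one {t : ℝ} (ht0 : 0 < t) (ht : t ≤ 1) :
    (t - 1) - (t - 1)^2 / (2*t) ≤ Real.log t := by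
  set g : ℝ → ℝ := fun x => Real.log x - (x-1) + (x-1)^2/(2*x) with hg
  have hder : ∀ x ∈ Set.Ioo (0:ℝ) 1, HasDerivAt g (-((x-1)^2/(2*x^2))) x := by
    intro x hx
    have hx0 : x ≠ 0 := ne_of_gt hx.1
    have hv : (2*x) ≠ 0 := by positivity
    have hu : HasDerivAt (fun x : ℝ => (x-1)^2) (↑2 * (x-1)^(2-1) * 1) x :=
      ((hasDerivAt_id x).sub_const 1).pow 2
    have hvv : HasDerivAt (fun x : ℝ => 2*x) 2 x := by
      simpa using (hasDerivAt_id x).const_mul 2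
    have h1 : HasDerivAt g (x⁻¹ - 1 +
        ((↑2 * (x-1)^(2-1) * 1) * (2*x) - (x-1)^2 * 2)/(2*x)^2) x :=
      (((Real.hasDerivAt_log hx0).sub ((hasDerivAt_id x).sub_const 1)).add (hu.div hvv hv))
    convert h1 using 1
    field_simp
    ring
  have hmono : AntitoneOn g (Set.Ioc (0:ℝ) 1) := by
    apply antitoneOn_of_deriv_nonpos (convex_Ioc 0 1)
    · intro x hx
      have hx0 : x ≠ 0 := ne_of_gt hx.1
      exact (ContinuousAt.add (ContinuousAt.sub (Real.continuousAt_log hx0) (by fun_prop))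
        (ContinuousAt.div (by fun_prop) (by fun_prop) (by positivity))).continuousWithinAt
    · intro x hx
      rw [interior_Ioc] at hx
      exact (hder x hx).differentiableAt.differentiableWithinAt
    · intro x hx
      rw [interior_Ioc] at hx
      rw [(hder x hx).deriv]
      have hx0 : 0 < x := hx.1
      have : 0 ≤ (x-1)^2/(2*x^2) := by positivity
      linarith
  have h1 : g t ≥ g 1 := hmono (Set.mem_Ioc.2 ⟨ht0, ht⟩) (by norm_num) ht
  simp [hg] at h1 ⊢
  linarith

lemma log_diff_le {y μ : ℝ} (hy : 0 < y) (hμ : 0 < μ) :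
    Real.log μ - Real.log y ≤ (μ - y)/μ + (y-μ)^2/(2*μ^2) + (y-μ)^2/(2*y*μ) := by
  have hlog : Real.log (y/μ) = Real.log y - Real.log μ :=
    Real.log_div (ne_of_gt hy) (ne_of_gt hμ)
  rcases le_total (y/μ) 1 with h | h
  · have hlb := log_lb_le_one (div_pos hy hμ) h
    have e : (y/μ - 1) - (y/μ - 1)^2/(2*(y/μ)) = (y-μ)/μ - (y-μ)^2/(2*y*μ) := by
      field_simp
    have hb : 0 ≤ (y-μ)^2/(2*μ^2) := by positivity
    rw [e, hlog] at hlb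
    have e2 : (μ - y)/μ = -((y-μ)/μ) := by ring
    linarith
  · have hlb := log_lb_ge_one h
    have e : (y/μ - 1) - (y/μ - 1)^2/2 = (y-μ)/μ - (y-μ)^2/(2*μ^2) := by
      field_simp
    have hb : 0 ≤ (y-μ)^2/(2*y*μ) := by positivity
    rw [e, hlog] at hlb
    have e2 : (μ - y)/μ = -((y-μ)/μ) := by ring
    linarith

theorem log_shifted_mean_bound_of_le (N : ℕ) (p : ℝ) (m : ℕ)
    (hp0 : 0 < p) (hp1 : p ≤ 1) (hm : 1 ≤ m) (hNp : (m : ℝ) ≤ N * p) (hN : 4 ≤ N) :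
    Real.log ((N : ℝ) * p + m) -
        ∑ j ∈ Finset.range (N + 1),
          (N.choose j : ℝ) * p ^ j * (1 - p) ^ (N - j) * Real.log ((j : ℝ) + m)
      ≤ 5 / (2 * ((N : ℝ) * p + m)) := by
  have hm1 : (1:ℝ) ≤ (m:ℝ) := by exact_mod_cast hm
  have hNp1 : (1:ℝ) ≤ (N:ℝ)*p := le_trans hm1 hNp
  set μ : ℝ := (N:ℝ)*p + m with hμdef
  have hμ : 0 < μ := by rw [hμdef]; linarith
  have hq0 : (0:ℝ) ≤ 1 - p := by linarith
  set w : ℕ → ℝ := fun j => (N.choose j : ℝ) * p ^ j * (1-p) ^ (N-j) with hw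
  have hw0 : ∀ j, 0 ≤ w j := fun j => by rw [hw]; positivity
  have key : ∀ j ∈ range (N+1),
      w j * (Real.log μ - Real.log ((j:ℝ)+m))
      ≤ ((μ - ((j:ℝ)+m))/μ) * w j
        + (1/(2*μ^2)) * (((j:ℝ) - (N:ℝ)*p)^2 * w j)
        + (1/(2*μ)) * ((((j:ℝ) - (N:ℝ)*p)^2 / ((j:ℝ)+1)) * w j) := by
    intro j hj
    have hj0 : (0:ℝ) ≤ (j:ℝ) := Nat.cast_nonneg j
    have hy : (0:ℝ) < (j:ℝ) + m := by linarith
    have hlog := log_diff_le hy hμ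
    have step1 : w j * (Real.log μ - Real.log ((j:ℝ)+m))
        ≤ w j * ((μ - ((j:ℝ)+m))/μ + (((j:ℝ)+m)-μ)^2/(2*μ^2)
            + (((j:ℝ)+m)-μ)^2/(2*((j:ℝ)+m)*μ)) :=
      mul_le_mul_of_nonneg_left hlog (hw0 j)
    have heq : w j * ((μ - ((j:ℝ)+m))/μ + (((j:ℝ)+m)-μ)^2/(2*μ^2)
            + (((j:ℝ)+m)-μ)^2/(2*((j:ℝ)+m)*μ))
        = ((μ - ((j:ℝ)+m))/μ) * w j
          + (1/(2*μ^2)) * (((j:ℝ) - (N:ℝ)*p)^2 * w j)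
          + (1/(2*μ)) * ((((j:ℝ) - (N:ℝ)*p)^2 / ((j:ℝ)+m)) * w j) := by
      have hd : ((j:ℝ)+m) - μ = (j:ℝ) - (N:ℝ)*p := by rw [hμdef]; ring
      rw [hd]
      field_simp
    have hcc : ((j:ℝ) - (N:ℝ)*p)^2 / ((j:ℝ)+m) ≤ ((j:ℝ) - (N:ℝ)*p)^2 / ((j:ℝ)+1) :=
      div_le_div_of_nonneg_left (by positivity) (by linarith) (by linarith)
    have step2 : (1/(2*μ)) * ((((j:ℝ) - (N:ℝ)*p)^2 / ((j:ℝ)+m)) * w j)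
        ≤ (1/(2*μ)) * ((((j:ℝ) - (N:ℝ)*p)^2 / ((j:ℝ)+1)) * w j) := by
      apply mul_le_mul_of_nonneg_left _ (by positivity)
      exact mul_le_mul_of_nonneg_right hcc (hw0 j)
    rw [heq] at step1
    linarith
  have hsplit : ∑ j ∈ range (N+1), w j * (Real.log μ - Real.log ((j:ℝ)+m))
      = Real.log μ - ∑ j ∈ range (N+1), w j * Real.log ((j:ℝ)+m) := by
    simp only [mul_sub]
    rw [Finset.sum_sub_distrib, ← Finset.sum_mul, hw, sum_w, one_mul]
  have hA : ∑ j ∈ range (N+1), ((μ - ((j:ℝ)+m))/μ) * w j = 0 := by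
    have e : ∀ j ∈ range (N+1), ((μ - ((j:ℝ)+m))/μ) * w j
        = ((N:ℝ)*p/μ) * w j - (1/μ)*((j:ℝ) * w j) := by
      intro j hj
      rw [hμdef]
      ring
    rw [Finset.sum_congr rfl e, Finset.sum_sub_distrib, ← Finset.mul_sum, ← Finset.mul_sum,
      hw, sum_w, sum_jw]
    field_simp
    ring
  have hB : ∑ j ∈ range (N+1), (1/(2*μ^2)) * (((j:ℝ) - (N:ℝ)*p)^2 * w j)
      = (1/(2*μ^2)) * ((N:ℝ)*p*(1-p)) := by
    rw [← Finset.mul_sum, hw, sum_sqw p ((N:ℝ)*p) N]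
    ring_nf
  have hC : ∑ j ∈ range (N+1), (1/(2*μ)) * ((((j:ℝ) - (N:ℝ)*p)^2 / ((j:ℝ)+1)) * w j)
      ≤ (1/(2*μ)) * 2 := by
    rw [← Finset.mul_sum]
    apply mul_le_mul_of_nonneg_left _ (by positivity)
    exact sum_ratio p N hp0 hp1 hNp1
  have hsum : Real.log μ - ∑ j ∈ range (N+1), w j * Real.log ((j:ℝ)+m)
      ≤ 0 + (1/(2*μ^2)) * ((N:ℝ)*p*(1-p)) + (1/(2*μ)) * 2 := by
    rw [← hsplit, ← hA, ← hB]
    calc ∑ j ∈ range (N+1), w j * (Real.log μ - Real.log ((j:ℝ)+m))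
        ≤ ∑ j ∈ range (N+1), (((μ - ((j:ℝ)+m))/μ) * w j
          + (1/(2*μ^2)) * (((j:ℝ) - (N:ℝ)*p)^2 * w j)
          + (1/(2*μ)) * ((((j:ℝ) - (N:ℝ)*p)^2 / ((j:ℝ)+1)) * w j)) :=
          Finset.sum_le_sum key
      _ = (∑ j ∈ range (N+1), ((μ - ((j:ℝ)+m))/μ) * w j)
          + (∑ j ∈ range (N+1), (1/(2*μ^2)) * (((j:ℝ) - (N:ℝ)*p)^2 * w j))
          + ∑ j ∈ range (N+1), (1/(2*μ)) * ((((j:ℝ) - (N:ℝ)*p)^2 / ((j:ℝ)+1)) * w j) := by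
          rw [Finset.sum_add_distrib, Finset.sum_add_distrib]
      _ ≤ _ := by
          have h0 : (0:ℝ) ≤ ∑ j ∈ range (N+1), ((μ - ((j:ℝ)+m))/μ) * w j + 0 := by
            rw [hA]; simp
          linarith [hC]
  have hfin : 0 + (1/(2*μ^2)) * ((N:ℝ)*p*(1-p)) + (1/(2*μ)) * 2 ≤ 5/(2*μ) := by
    have h1 : (N:ℝ)*p*(1-p) ≤ μ := by nlinarith
    have h2 : (1/(2*μ^2)) * ((N:ℝ)*p*(1-p)) ≤ 1/(2*μ) := by
      have := mul_le_mul_of_nonneg_left h1 (by positivity : (0:ℝ) ≤ 1/(2*μ^2))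
      have e : (1/(2*μ^2)) * μ = 1/(2*μ) := by field_simp
      linarith [e ▸ this]
    have h5 : 5/(2*μ) = 1/(2*μ) + (1/(2*μ))*2 + 1/μ := by field_simp; ring
    have h6 : 0 ≤ 1/μ := by positivity
    linarith
  exact le_trans hsum hfin
end

section
/- Let X ~ Binomial(N, p) and let m ≥ 1 be an integer with Np < m. Then log(Np + m) − E[log(X + m)] ≤ 2/(Np + m). -/
open Finset

lemma bsum0 (p : ℝ) (n : ℕ) :
    ∑ j ∈ range (n+1), (n.choose j : ℝ) * p ^ j * (1 - p) ^ (n - j) = 1 := by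
  have h := add_pow p (1 - p) n
  have h1 : p + (1 - p) = 1 := by ring
  rw [h1, one_pow] at h
  calc ∑ j ∈ range (n+1), (n.choose j : ℝ) * p ^ j * (1 - p) ^ (n - j)
      = ∑ j ∈ range (n+1), p ^ j * (1 - p) ^ (n - j) * (n.choose j : ℝ) :=
        Finset.sum_congr rfl (fun j _ => by ring)
    _ = 1 := h.symm

lemma bsum2 (p : ℝ) (n : ℕ) :
    ∑ j ∈ range (n+1), (j : ℝ) * ((j:ℝ) - 1) * ((n.choose j : ℝ) * p ^ j * (1 - p) ^ (n - j))
      = n * (n - 1) * p ^ 2 := by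
  match n with
  | 0 => simp
  | 1 =>
    rw [Finset.sum_range_succ, Finset.sum_range_succ, Finset.sum_range_zero]
    norm_num
  | (n+2) =>
    rw [Finset.sum_range_succ', Finset.sum_range_succ']
    simp only [Nat.cast_zero, Nat.cast_one, zero_mul, sub_self, mul_zero, zero_sub,
      add_zero]
    have key : ∑ i ∈ range (n + 1),
        (↑(i + 1 + 1) : ℝ) * ((↑(i + 1 + 1) : ℝ) - 1) *
          (↑((n + 2).choose (i + 1 + 1)) * p ^ (i + 1 + 1) * (1 - p) ^ (n + 2 - (i + 1 + 1)))
        = ∑ i ∈ range (n + 1),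
            ((n:ℝ)+2) * ((n:ℝ)+1) * p ^ 2 * ((n.choose i : ℝ) * p ^ i * (1 - p) ^ (n - i)) := by
      refine Finset.sum_congr rfl fun i hi => ?_
      have hc1 : ((n+1) * n.choose i : ℕ) = ((n+1).choose (i+1) * (i+1) : ℕ) :=
        Nat.add_one_mul_choose_eq n i
      have hc2 : ((n+2) * (n+1).choose (i+1) : ℕ) = ((n+2).choose (i+2) * (i+2) : ℕ) :=
        Nat.add_one_mul_choose_eq (n+1) (i+1)
      have hc1' : ((n:ℝ)+1) * (n.choose i : ℝ) = ((n+1).choose (i+1) : ℝ) * ((i:ℝ)+1) := by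
        exact_mod_cast congrArg (Nat.cast : ℕ → ℝ) hc1
      have hc2' : ((n:ℝ)+2) * ((n+1).choose (i+1) : ℝ) = ((n+2).choose (i+2) : ℝ) * ((i:ℝ)+2) := by
        exact_mod_cast congrArg (Nat.cast : ℕ → ℝ) hc2
      have he : n + 2 - (i + 1 + 1) = n - i := by omega
      have hcast : ((i+1+1 : ℕ) : ℕ) = i + 2 := by omega
      rw [he]
      push_cast
      linear_combination (-(p ^ i * p * p * (1 - p) ^ (n - i) * ((i:ℝ)+1))) * hc2'
        + (-(p ^ i * p * p * (1 - p) ^ (n - i) * ((n:ℝ)+2))) * hc1'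
    rw [key, ← Finset.mul_sum, bsum0 p n]
    push_cast; ring

lemma log_lb (x μ c : ℝ) (hc : 0 < c) (hx : c ≤ x) (hμ : c ≤ μ) :
    Real.log μ + (x - μ)/μ - (x - μ)^2/c^2 ≤ Real.log x := by
  have hx0 : 0 < x := lt_of_lt_of_le hc hx
  have hμ0 : 0 < μ := lt_of_lt_of_le hc hμ
  have h1 : 1 - μ/x ≤ Real.log x - Real.log μ := by
    have h := Real.one_sub_inv_le_log_of_pos (div_pos hx0 hμ0)
    rwa [Real.log_div hx0.ne' hμ0.ne', inv_div] at h
  have h2 : (1:ℝ)/(x*μ) ≤ 1/c^2 := by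
    apply one_div_le_one_div_of_le (by positivity)
    nlinarith
  have e : 1 - μ/x - ((x-μ)/μ - (x-μ)^2/c^2)
      = (x-μ)^2 * (1/c^2 - 1/(x*μ)) := by
    field_simp
    ring
  have h3 : 0 ≤ (x-μ)^2 * (1/c^2 - 1/(x*μ)) :=
    mul_nonneg (sq_nonneg _) (by linarith)
  linarith
lemma bsum1 (p : ℝ) (n : ℕ) :
    ∑ j ∈ range (n+1), (j : ℝ) * ((n.choose j : ℝ) * p ^ j * (1 - p) ^ (n - j))
      = n * p := by
  cases n with
  | zero => simp
  | succ n =>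
    rw [Finset.sum_range_succ']
    simp only [Nat.cast_zero, zero_mul, add_zero]
    have key : ∑ i ∈ range (n + 1),
        (↑(i + 1) : ℝ) * (↑((n + 1).choose (i + 1)) * p ^ (i + 1) * (1 - p) ^ (n + 1 - (i + 1)))
        = ∑ i ∈ range (n + 1), ((n:ℝ)+1) * p * ((n.choose i : ℝ) * p ^ i * (1 - p) ^ (n - i)) := by
      refine Finset.sum_congr rfl fun i hi => ?_
      have hc : ((n+1) * n.choose i : ℕ) = ((n+1).choose (i+1) * (i+1) : ℕ) :=
        Nat.add_one_mul_choose_eq n i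
      have hc' : ((n:ℝ)+1) * (n.choose i : ℝ) = ((n+1).choose (i+1) : ℝ) * ((i:ℝ)+1) := by
        exact_mod_cast congrArg (Nat.cast : ℕ → ℝ) hc
      rw [Nat.succ_sub_succ]
      push_cast
      linear_combination (-(p ^ i * p * (1 - p) ^ (n - i))) * hc'
    rw [key, ← Finset.mul_sum, bsum0 p n]
    push_cast; ring

theorem log_shifted_mean_bound_of_lt (N : ℕ) (p : ℝ) (m : ℕ)
    (hp0 : 0 < p) (hp1 : p ≤ 1) (hm : 1 ≤ m) (hNp : (N : ℝ) * p < m) :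
    Real.log ((N : ℝ) * p + m) -
        ∑ j ∈ Finset.range (N + 1),
          (N.choose j : ℝ) * p ^ j * (1 - p) ^ (N - j) * Real.log ((j : ℝ) + m)
      ≤ 2 / ((N : ℝ) * p + m) := by
  have hmR : (1:ℝ) ≤ (m:ℝ) := by exact_mod_cast hm
  have hNp0 : 0 ≤ (N:ℝ) * p := mul_nonneg (Nat.cast_nonneg N) hp0.le
  have hμ0 : 0 < (N:ℝ) * p + m := by linarith
  have hq0 : 0 ≤ 1 - p := by linarith
  have hw : ∀ j : ℕ, 0 ≤ (N.choose j : ℝ) * p ^ j * (1 - p) ^ (N - j) := fun j =>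
    mul_nonneg (mul_nonneg (Nat.cast_nonneg _) (pow_nonneg hp0.le _)) (pow_nonneg hq0 _)
  set A : ℝ := Real.log ((N:ℝ)*p + m) - (N*p)/((N:ℝ)*p + m) - (N*p)^2/(m:ℝ)^2 with hA
  set B : ℝ := 1/((N:ℝ)*p + m) - (1 - 2*(N*p))/(m:ℝ)^2 with hB
  set Cc : ℝ := -(1/(m:ℝ)^2) with hC
  have point : ∀ j ∈ range (N+1),
      (N.choose j : ℝ) * p ^ j * (1 - p) ^ (N - j) *
        (Real.log ((N:ℝ)*p + m) + ((j:ℝ) - N*p)/((N:ℝ)*p + m) - ((j:ℝ) - N*p)^2/(m:ℝ)^2)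
      ≤ (N.choose j : ℝ) * p ^ j * (1 - p) ^ (N - j) * Real.log ((j : ℝ) + m) := by
    intro j _
    apply mul_le_mul_of_nonneg_left _ (hw j)
    have h := log_lb ((j:ℝ)+m) ((N:ℝ)*p + m) (m:ℝ) (by linarith) (by linarith [show (0:ℝ) ≤ (j:ℝ) from Nat.cast_nonneg j]) (by linarith)
    have e1 : (j:ℝ) + m - ((N:ℝ)*p + m) = (j:ℝ) - N*p := by ring
    rwa [e1] at h
  have hsum_le := Finset.sum_le_sum point
  have hval : ∑ j ∈ range (N+1),
      (N.choose j : ℝ) * p ^ j * (1 - p) ^ (N - j) *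
        (Real.log ((N:ℝ)*p + m) + ((j:ℝ) - N*p)/((N:ℝ)*p + m) - ((j:ℝ) - N*p)^2/(m:ℝ)^2)
      = A + B * ((N:ℝ)*p) + Cc * ((N:ℝ)*((N:ℝ)-1)*p^2) := by
    calc ∑ j ∈ range (N+1),
        (N.choose j : ℝ) * p ^ j * (1 - p) ^ (N - j) *
          (Real.log ((N:ℝ)*p + m) + ((j:ℝ) - N*p)/((N:ℝ)*p + m) - ((j:ℝ) - N*p)^2/(m:ℝ)^2)
        = ∑ j ∈ range (N+1),
            (A * ((N.choose j : ℝ) * p ^ j * (1 - p) ^ (N - j))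
             + B * ((j:ℝ) * ((N.choose j : ℝ) * p ^ j * (1 - p) ^ (N - j)))
             + Cc * ((j:ℝ) * ((j:ℝ) - 1) * ((N.choose j : ℝ) * p ^ j * (1 - p) ^ (N - j)))) :=
          Finset.sum_congr rfl (fun j _ => by rw [hA, hB, hC]; ring)
      _ = A * (∑ j ∈ range (N+1), (N.choose j : ℝ) * p ^ j * (1 - p) ^ (N - j))
          + B * (∑ j ∈ range (N+1), (j:ℝ) * ((N.choose j : ℝ) * p ^ j * (1 - p) ^ (N - j)))
          + Cc * (∑ j ∈ range (N+1), (j:ℝ) * ((j:ℝ) - 1) * ((N.choose j : ℝ) * p ^ j * (1 - p) ^ (N - j))) := by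
          rw [Finset.sum_add_distrib, Finset.sum_add_distrib, ← Finset.mul_sum,
            ← Finset.mul_sum, ← Finset.mul_sum]
      _ = A + B * ((N:ℝ)*p) + Cc * ((N:ℝ)*((N:ℝ)-1)*p^2) := by
          rw [bsum0, bsum1, bsum2, mul_one]
  rw [hval] at hsum_le
  have hm2 : (0:ℝ) < (m:ℝ)^2 := by positivity
  have hfinal : Real.log ((N:ℝ)*p + m) - (A + B * ((N:ℝ)*p) + Cc * ((N:ℝ)*((N:ℝ)-1)*p^2))
      = (N:ℝ)*p*(1-p)/(m:ℝ)^2 := by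
    rw [hA, hB, hC]
    field_simp
    ring
  have hlast : (N:ℝ)*p*(1-p)/(m:ℝ)^2 ≤ 2/((N:ℝ)*p + m) := by
    rw [div_le_div_iff₀ hm2 hμ0]
    nlinarith [mul_nonneg (mul_nonneg hNp0 hq0) hNp0, mul_nonneg hNp0 hp0.le,
      mul_nonneg (mul_nonneg hNp0 hp0.le) hNp0]
  calc Real.log ((N : ℝ) * p + m) -
        ∑ j ∈ Finset.range (N + 1),
          (N.choose j : ℝ) * p ^ j * (1 - p) ^ (N - j) * Real.log ((j : ℝ) + m)
      ≤ Real.log ((N:ℝ)*p + m) - (A + B * ((N:ℝ)*p) + Cc * ((N:ℝ)*((N:ℝ)-1)*p^2)) :=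
        sub_le_sub_left hsum_le _
    _ = (N:ℝ)*p*(1-p)/(m:ℝ)^2 := hfinal
    _ ≤ 2/((N:ℝ)*p + m) := hlast
end

section
/- Let X ~ Binomial(N, p) and let k be an integer with 0 ≤ k < Np and let m ≥ 0. Then E[log(X + m) | X ≥ k] − log(Np) ≤ log((1 + m/(Np)) / (1 − exp(−2(Np − k)²/N))). -/
open Finset

lemma padeAux (z : ℝ) (hz0 : 0 < z) :
    HasDerivAt (fun z : ℝ => Real.log z - 2 * (z - 1) / (z + 1))
      (1 / z - 4 / (z + 1) ^ 2) z := by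
  have hz1 : z + 1 ≠ 0 := by positivity
  have h2 : HasDerivAt (fun z : ℝ => 2 * (z - 1) / (z + 1))
      ((2 * 1 * (z + 1) - 2 * (z - 1) * 1) / (z + 1) ^ 2) z := by
    exact (((hasDerivAt_id z).sub_const (1:ℝ)).const_mul (2:ℝ)).div
      ((hasDerivAt_id z).add_const (1:ℝ)) hz1
  have := (Real.hasDerivAt_log (ne_of_gt hz0)).sub h2
  exact this.congr_deriv (by rw [one_div]; ring)

lemma padeLog (x : ℝ) (hx : 1 ≤ x) : 2 * (x - 1) / (x + 1) ≤ Real.log x := by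
  have hmono : MonotoneOn (fun z : ℝ => Real.log z - 2 * (z - 1) / (z + 1)) (Set.Ici 1) := by
    apply monotoneOn_of_deriv_nonneg (convex_Ici 1)
    · intro z hz
      have hz0 : (0:ℝ) < z := lt_of_lt_of_le one_pos hz
      exact ((padeAux z hz0).continuousAt).continuousWithinAt
    · intro z hz
      rw [interior_Ici] at hz
      exact ((padeAux z (by linarith [Set.mem_Ioi.mp hz])).differentiableAt).differentiableWithinAt
    · intro z hz
      rw [interior_Ici, Set.mem_Ioi] at hz
      have hz0 : (0:ℝ) < z := by linarith
      rw [(padeAux z hz0).deriv]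
      rw [div_sub_div _ _ (ne_of_gt hz0) (by positivity), le_div_iff₀ (by positivity)]
      nlinarith
  have := hmono (Set.mem_Ici.mpr le_rfl) (Set.mem_Ici.mpr hx) hx
  simp only [Real.log_one] at this
  linarith

lemma keyB (u p : ℝ) (hu0 : 0 < u) (hu1 : u ≤ 1) (hp0 : 0 ≤ p) (hp1 : p ≤ 1) :
    4 * p * (1 - p) * (1 - u) ≤ (-Real.log u) * (1 - p + p * u) := by
  set v := Real.sqrt u with hv
  have hv0 : 0 < v := Real.sqrt_pos.mpr hu0
  have hv1 : v ≤ 1 := by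
    rw [hv, show (1:ℝ) = Real.sqrt 1 by simp]
    exact Real.sqrt_le_sqrt hu1
  have hvsq : v ^ 2 = u := Real.sq_sqrt hu0.le
  have hlog : 4 * (1 - v) / (1 + v) ≤ -Real.log u := by
    have h1 : 2 * (1/v - 1) / (1/v + 1) ≤ Real.log (1/v) :=
      padeLog _ (by rw [le_div_iff₀ hv0]; linarith)
    rw [Real.log_div one_ne_zero (ne_of_gt hv0), Real.log_one] at h1
    have h2 : 2 * (1/v - 1) / (1/v + 1) = 2 * (1 - v) / (1 + v) := by
      rw [div_eq_div_iff (by positivity) (by positivity)]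
      field_simp
    rw [h2] at h1
    have h3 : -Real.log u = -2 * Real.log v := by
      rw [← hvsq, Real.log_pow]; push_cast; ring
    rw [h3]
    have : 2 * (1 - v) / (1 + v) ≤ -Real.log v := by linarith
    rw [div_le_iff₀ (by positivity : (0:ℝ) < 1 + v)] at this ⊢
    linarith
  have hw : (0:ℝ) ≤ 1 - p + p * u := by nlinarith
  have h4 : 4 * p * (1 - p) * (1 - u) ≤ 4 * (1 - v) / (1 + v) * (1 - p + p * u) := by
    rw [div_mul_eq_mul_div, le_div_iff₀ (by positivity : (0:ℝ) < 1 + v)]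
    nlinarith [mul_nonneg (by linarith : (0:ℝ) ≤ 1 - v) (sq_nonneg (1 - p * (1 + v)))]
  calc 4 * p * (1 - p) * (1 - u) ≤ 4 * (1 - v) / (1 + v) * (1 - p + p * u) := h4
    _ ≤ (-Real.log u) * (1 - p + p * u) := mul_le_mul_of_nonneg_right hlog hw

lemma bernoulli_mgf (p t : ℝ) (hp0 : 0 ≤ p) (hp1 : p ≤ 1) (ht : 0 ≤ t) :
    p * Real.exp (-t) + (1 - p) ≤ Real.exp (t ^ 2 / 8 - t * p) := by
  have hd : ∀ s : ℝ, 0 < 1 - p + p * Real.exp (-s) := by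
    intro s
    rcases lt_or_eq_of_le hp0 with h | h
    · nlinarith [Real.exp_pos (-s)]
    · simp [← h]
  set F : ℝ → ℝ := fun s => s ^ 2 / 8 - s * p - Real.log (1 - p + p * Real.exp (-s)) with hF
  have hderiv : ∀ s : ℝ, HasDerivAt F
      (s / 4 - p + p * Real.exp (-s) / (1 - p + p * Real.exp (-s))) s := by
    intro s
    have h1 : HasDerivAt (fun s : ℝ => Real.exp (-s)) (Real.exp (-s) * (-1)) s :=
      ((hasDerivAt_id s).neg).exp
    have h2 : HasDerivAt (fun s : ℝ => 1 - p + p * Real.exp (-s))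
        (p * (Real.exp (-s) * (-1))) s := (h1.const_mul p).const_add (1 - p)
    have h3 : HasDerivAt (fun s : ℝ => Real.log (1 - p + p * Real.exp (-s)))
        (p * (Real.exp (-s) * (-1)) / (1 - p + p * Real.exp (-s))) s :=
      h2.log (ne_of_gt (hd s))
    have h4 : HasDerivAt (fun s : ℝ => s ^ 2 / 8 - s * p) ((2:ℕ) * s ^ 1 / 8 - p) s := by
      exact (((hasDerivAt_pow 2 s).div_const 8).sub ((hasDerivAt_id s).mul_const p)).congr_deriv
        (by norm_num)
    have h5 := h4.sub h3
    refine h5.congr_deriv ?_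
    have hds := ne_of_gt (hd s)
    field_simp
    ring
  have hmono : MonotoneOn F (Set.Ici 0) := by
    apply monotoneOn_of_deriv_nonneg (convex_Ici 0)
    · intro s _
      exact (hderiv s).continuousAt.continuousWithinAt
    · intro s _
      exact (hderiv s).differentiableAt.differentiableWithinAt
    · intro s hs
      rw [interior_Ici, Set.mem_Ioi] at hs
      rw [(hderiv s).deriv]
      set u := Real.exp (-s) with hu
      have hu0 : 0 < u := Real.exp_pos _
      have hu1 : u ≤ 1 := Real.exp_le_one_iff.mpr (by linarith)
      have hkk := keyB u p hu0 hu1 hp0 hp1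
      rw [hu, Real.log_exp, neg_neg] at hkk
      have hdd := hd s
      have heq : s / 4 - p + p * u / (1 - p + p * u)
          = ((s / 4 - p) * (1 - p + p * u) + p * u) / (1 - p + p * u) := by
        have hdd' : (1 - p + p * u) ≠ 0 := by rw [hu]; exact hdd.ne'
        field_simp
      rw [heq]
      apply div_nonneg _ (le_of_lt hdd)
      nlinarith
  have hF0 : F 0 = 0 := by simp [hF]
  have hFt : 0 ≤ F t := by
    have := hmono (Set.mem_Ici.mpr le_rfl) (Set.mem_Ici.mpr ht) ht
    rw [hF0] at this; exact this
  have hlog : Real.log (1 - p + p * Real.exp (-t)) ≤ t ^ 2 / 8 - t * p := by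
    simp only [hF] at hFt; linarith
  have := (Real.log_le_iff_le_exp (hd t)).mp hlog
  linarith

lemma wtotal (N : ℕ) (p : ℝ) :
    ∑ j ∈ Finset.range (N + 1), (N.choose j : ℝ) * p ^ j * (1 - p) ^ (N - j) = 1 := by
  have h : ∀ j ∈ Finset.range (N + 1),
      (N.choose j : ℝ) * p ^ j * (1 - p) ^ (N - j)
        = p ^ j * (1 - p) ^ (N - j) * (N.choose j : ℝ) := fun j _ => by ring
  rw [Finset.sum_congr rfl h, ← add_pow]
  norm_num

lemma binom_mean (n : ℕ) (x y : ℝ) :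
    ∑ j ∈ Finset.range (n + 1), (n.choose j : ℝ) * x ^ j * y ^ (n - j) * (j : ℝ)
      = n * x * (x + y) ^ (n - 1) := by
  cases n with
  | zero => simp
  | succ n =>
    rw [Finset.sum_range_succ']
    have h : ∀ i ∈ Finset.range (n + 1),
        ((n+1).choose (i+1) : ℝ) * x ^ (i+1) * y ^ (n + 1 - (i+1)) * ((i:ℕ) + 1 : ℕ)
          = ((n:ℝ) + 1) * x * (x ^ i * y ^ (n - i) * (n.choose i : ℝ)) := by
      intro i _
      have he : n + 1 - (i + 1) = n - i := by omega
      rw [he]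
      have hc : ((n+1).choose (i+1) : ℝ) * ((i:ℝ) + 1) = ((n:ℝ) + 1) * (n.choose i : ℝ) := by
        exact_mod_cast (Nat.add_one_mul_choose_eq n i).symm
      push_cast
      calc ((n+1).choose (i+1) : ℝ) * x ^ (i+1) * y ^ (n - i) * ((i:ℝ) + 1)
          = (((n+1).choose (i+1) : ℝ) * ((i:ℝ) + 1)) * (x ^ (i+1) * y ^ (n - i)) := by ring
        _ = (((n:ℝ) + 1) * (n.choose i : ℝ)) * (x ^ (i+1) * y ^ (n - i)) := by rw [hc]
        _ = ((n:ℝ) + 1) * x * (x ^ i * y ^ (n - i) * (n.choose i : ℝ)) := by ring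
    rw [Finset.sum_congr rfl h, ← Finset.mul_sum, ← add_pow]
    simp

lemma wmean (N : ℕ) (p : ℝ) :
    ∑ j ∈ Finset.range (N + 1), (N.choose j : ℝ) * p ^ j * (1 - p) ^ (N - j) * (j : ℝ)
      = N * p := by
  rw [binom_mean]
  norm_num

lemma chernoff (N K : ℕ) (p a : ℝ) (hp0 : 0 ≤ p) (hp1 : p ≤ 1) (hN : 0 < N)
    (h0a : 0 ≤ a) (hKa : (K : ℝ) ≤ a + 1) (haN : a ≤ N * p) :
    ∑ j ∈ Finset.range K, (N.choose j : ℝ) * p ^ j * (1 - p) ^ (N - j)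
      ≤ Real.exp (-2 * ((N : ℝ) * p - a) ^ 2 / N) := by
  have hNR : (0:ℝ) < N := by exact_mod_cast hN
  set t := 4 * ((N : ℝ) * p - a) / N with htdef
  have ht : 0 ≤ t := by
    apply div_nonneg _ hNR.le
    nlinarith
  have hq : (0:ℝ) ≤ 1 - p := by linarith
  have hw : ∀ j : ℕ, 0 ≤ (N.choose j : ℝ) * p ^ j * (1 - p) ^ (N - j) := by
    intro j; positivity
  have hKN : K ≤ N + 1 := by
    have : (K : ℝ) ≤ (N : ℝ) + 1 := by nlinarith
    exact_mod_cast this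
  have step1 : ∑ j ∈ Finset.range K, (N.choose j : ℝ) * p ^ j * (1 - p) ^ (N - j)
      ≤ Real.exp (t * a) * ∑ j ∈ Finset.range (N + 1),
          (N.choose j : ℝ) * p ^ j * (1 - p) ^ (N - j) * Real.exp (-t * j) := by
    have s1 : ∑ j ∈ Finset.range K, (N.choose j : ℝ) * p ^ j * (1 - p) ^ (N - j)
        ≤ ∑ j ∈ Finset.range K,
            Real.exp (t * a) * ((N.choose j : ℝ) * p ^ j * (1 - p) ^ (N - j) * Real.exp (-t * j)) := by
      apply Finset.sum_le_sum
      intro j hj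
      have hja : (j : ℝ) ≤ a := by
        have : (j : ℝ) + 1 ≤ K := by exact_mod_cast Finset.mem_range.mp hj
        linarith
      have he1 : 1 ≤ Real.exp (t * a) * Real.exp (-t * j) := by
        rw [← Real.exp_add, ← Real.exp_zero]
        apply Real.exp_le_exp.mpr
        nlinarith
      nlinarith [hw j, mul_nonneg (Real.exp_pos (t * a)).le (Real.exp_pos (-t * (j:ℝ))).le]
    refine s1.trans ?_
    rw [← Finset.mul_sum]
    apply mul_le_mul_of_nonneg_left _ (Real.exp_pos _).le
    apply Finset.sum_le_sum_of_subset_of_nonneg (Finset.range_subset_range.mpr hKN)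
    intro j _ _
    have := hw j
    positivity
  have step2 : ∑ j ∈ Finset.range (N + 1),
      (N.choose j : ℝ) * p ^ j * (1 - p) ^ (N - j) * Real.exp (-t * j)
        = (p * Real.exp (-t) + (1 - p)) ^ N := by
    have h : ∀ j ∈ Finset.range (N + 1),
        (N.choose j : ℝ) * p ^ j * (1 - p) ^ (N - j) * Real.exp (-t * j)
          = (p * Real.exp (-t)) ^ j * (1 - p) ^ (N - j) * (N.choose j : ℝ) := by
      intro j _
      rw [mul_pow, ← Real.exp_nat_mul]
      ring_nf
    rw [Finset.sum_congr rfl h, ← add_pow]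
  have step3 : (p * Real.exp (-t) + (1 - p)) ^ N ≤ Real.exp (t ^ 2 / 8 - t * p) ^ N := by
    apply pow_le_pow_left₀ _ (bernoulli_mgf p t hp0 hp1 ht)
    have := (Real.exp_pos (-t)).le
    nlinarith
  have step4 : Real.exp (t * a) * Real.exp (t ^ 2 / 8 - t * p) ^ N
      = Real.exp (-2 * ((N : ℝ) * p - a) ^ 2 / N) := by
    rw [← Real.exp_nat_mul, ← Real.exp_add]
    congr 1
    rw [htdef]
    field_simp
    ring
  calc ∑ j ∈ Finset.range K, (N.choose j : ℝ) * p ^ j * (1 - p) ^ (N - j)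
      ≤ Real.exp (t * a) * ∑ j ∈ Finset.range (N + 1),
          (N.choose j : ℝ) * p ^ j * (1 - p) ^ (N - j) * Real.exp (-t * j) := step1
    _ = Real.exp (t * a) * (p * Real.exp (-t) + (1 - p)) ^ N := by rw [step2]
    _ ≤ Real.exp (t * a) * Real.exp (t ^ 2 / 8 - t * p) ^ N :=
        mul_le_mul_of_nonneg_left step3 (Real.exp_pos _).le
    _ = Real.exp (-2 * ((N : ℝ) * p - a) ^ 2 / N) := step4

theorem binomial_truncated_log_upper_bound (N : ℕ) (p : ℝ) (k m : ℕ)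
    (hp0 : 0 < p) (hp1 : p ≤ 1) (hk : (k : ℝ) < N * p) :
    (∑ j ∈ Finset.Icc k N,
          (N.choose j : ℝ) * p ^ j * (1 - p) ^ (N - j) * Real.log ((j : ℝ) + m)) /
        (∑ j ∈ Finset.Icc k N, (N.choose j : ℝ) * p ^ j * (1 - p) ^ (N - j)) -
      Real.log ((N : ℝ) * p)
      ≤ Real.log ((1 + (m : ℝ) / (N * p)) /
          (1 - Real.exp (-2 * ((N : ℝ) * p - k) ^ 2 / N))) := by
  have hq : (0:ℝ) ≤ 1 - p := by linarith
  have hw : ∀ j : ℕ, 0 ≤ (N.choose j : ℝ) * p ^ j * (1 - p) ^ (N - j) := by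
    intro j; positivity
  have hk0 : (0:ℝ) ≤ (k : ℝ) := Nat.cast_nonneg k
  have hNp : 0 < (N : ℝ) * p := lt_of_le_of_lt hk0 hk
  have hNR : (0:ℝ) < N := by nlinarith
  have hN : 0 < N := by exact_mod_cast hNR
  have hkN : k < N := by
    have : (k : ℝ) < N := by nlinarith
    exact_mod_cast this
  set e := Real.exp (-2 * ((N : ℝ) * p - k) ^ 2 / N) with hedef
  have he1 : e < 1 := by
    rw [hedef, Real.exp_lt_one_iff]
    apply div_neg_of_neg_of_pos _ hNR
    nlinarith
  have h1me : 0 < 1 - e := by linarith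
  -- the effective lower cutoff
  set K := if m = 0 then max k 1 else k with hKdef
  have hkK : k ≤ K := by
    rw [hKdef]; split
    · exact le_max_left _ _
    · exact le_rfl
  have hKk1 : (K : ℝ) ≤ (k : ℝ) + 1 := by
    have : K ≤ k + 1 := by
      rw [hKdef]; split
      · exact max_le (Nat.le_succ k) (by omega)
      · omega
    exact_mod_cast this
  have hK1 : ∀ j, K ≤ j → 1 ≤ j + m := by
    intro j hj
    rw [hKdef] at hj
    by_cases hm : m = 0
    · rw [if_pos hm] at hj
      have := le_max_right k 1
      omega
    · rw [if_neg hm] at hj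
      omega
  have hKN : K ≤ N := by
    rw [hKdef]; split
    · exact max_le hkN.le hN
    · exact hkN.le
  have hsub : Finset.Icc K N ⊆ Finset.Icc k N := Finset.Icc_subset_Icc hkK le_rfl
  have hsubr : Finset.Icc K N ⊆ Finset.range (N + 1) := by
    intro j hj
    rw [Finset.mem_Icc] at hj
    rw [Finset.mem_range]
    omega
  -- numerator over Icc k N equals numerator over Icc K N
  have hnum : ∑ j ∈ Finset.Icc K N,
      (N.choose j : ℝ) * p ^ j * (1 - p) ^ (N - j) * Real.log ((j : ℝ) + m)
        = ∑ j ∈ Finset.Icc k N,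
          (N.choose j : ℝ) * p ^ j * (1 - p) ^ (N - j) * Real.log ((j : ℝ) + m) := by
    apply Finset.sum_subset hsub
    intro j hj hnj
    rw [Finset.mem_Icc] at hj
    rw [Finset.mem_Icc, not_and_or] at hnj
    have hjK : j < K := by omega
    rw [hKdef] at hjK
    by_cases hm : m = 0
    · rw [if_pos hm] at hjK
      have hj0 : j = 0 := by
        rcases lt_max_iff.mp hjK with h | h
        · omega
        · omega
      rw [hj0, hm]
      norm_num
    · rw [if_neg hm] at hjK
      omega
  -- positivity of sums
  have hwN : 0 < (N.choose N : ℝ) * p ^ N * (1 - p) ^ (N - N) := by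
    simp only [Nat.choose_self, Nat.cast_one, Nat.sub_self, pow_zero, one_mul, mul_one]
    positivity
  have hNmem : N ∈ Finset.Icc K N := Finset.mem_Icc.mpr ⟨hKN, le_rfl⟩
  have hWT : 0 < ∑ j ∈ Finset.Icc K N, (N.choose j : ℝ) * p ^ j * (1 - p) ^ (N - j) :=
    Finset.sum_pos' (fun j _ => hw j) ⟨N, hNmem, hwN⟩
  have hW : 0 < ∑ j ∈ Finset.Icc k N, (N.choose j : ℝ) * p ^ j * (1 - p) ^ (N - j) :=
    Finset.sum_pos' (fun j _ => hw j) ⟨N, Finset.mem_Icc.mpr ⟨hkK.trans hKN, le_rfl⟩, hwN⟩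
  have hWTW : ∑ j ∈ Finset.Icc K N, (N.choose j : ℝ) * p ^ j * (1 - p) ^ (N - j)
      ≤ ∑ j ∈ Finset.Icc k N, (N.choose j : ℝ) * p ^ j * (1 - p) ^ (N - j) :=
    Finset.sum_le_sum_of_subset_of_nonneg hsub (fun j _ _ => hw j)
  -- nonnegativity of numerator
  have hjm1 : ∀ j ∈ Finset.Icc K N, (1:ℝ) ≤ (j : ℝ) + m := by
    intro j hj
    have := hK1 j (Finset.mem_Icc.mp hj).1
    exact_mod_cast Nat.one_le_cast.mpr this |>.trans_eq (by push_cast; ring)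
  have hA : 0 ≤ ∑ j ∈ Finset.Icc K N,
      (N.choose j : ℝ) * p ^ j * (1 - p) ^ (N - j) * Real.log ((j : ℝ) + m) := by
    apply Finset.sum_nonneg
    intro j hj
    exact mul_nonneg (hw j) (Real.log_nonneg (hjm1 j hj))
  -- Jensen
  have hjensen : (∑ j ∈ Finset.Icc K N,
      (N.choose j : ℝ) * p ^ j * (1 - p) ^ (N - j) * Real.log ((j : ℝ) + m))
        / (∑ j ∈ Finset.Icc K N, (N.choose j : ℝ) * p ^ j * (1 - p) ^ (N - j))
      ≤ Real.log ((∑ j ∈ Finset.Icc K N,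
          (N.choose j : ℝ) * p ^ j * (1 - p) ^ (N - j) * ((j : ℝ) + m))
        / (∑ j ∈ Finset.Icc K N, (N.choose j : ℝ) * p ^ j * (1 - p) ^ (N - j))) := by
    have := (strictConcaveOn_log_Ioi.concaveOn).le_map_centerMass
      (t := Finset.Icc K N)
      (w := fun j => (N.choose j : ℝ) * p ^ j * (1 - p) ^ (N - j))
      (p := fun j : ℕ => (j : ℝ) + m)
      (fun j _ => hw j) hWT
      (fun j hj => Set.mem_Ioi.mpr (lt_of_lt_of_le one_pos (hjm1 j hj)))
    simp only [Finset.centerMass, smul_eq_mul, Function.comp] at this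
    rw [div_eq_inv_mul, div_eq_inv_mul]
    exact this
  -- bound the conditional mean
  have hST_le : ∑ j ∈ Finset.Icc K N,
      (N.choose j : ℝ) * p ^ j * (1 - p) ^ (N - j) * ((j : ℝ) + m) ≤ N * p + m := by
    have h1 : ∑ j ∈ Finset.Icc K N,
        (N.choose j : ℝ) * p ^ j * (1 - p) ^ (N - j) * ((j : ℝ) + m)
          ≤ ∑ j ∈ Finset.range (N + 1),
            (N.choose j : ℝ) * p ^ j * (1 - p) ^ (N - j) * ((j : ℝ) + m) := by
      apply Finset.sum_le_sum_of_subset_of_nonneg hsubr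
      intro j _ _
      have := hw j
      have : (0:ℝ) ≤ (j:ℝ) + m := by positivity
      exact mul_nonneg (hw j) this
    have h2 : ∑ j ∈ Finset.range (N + 1),
        (N.choose j : ℝ) * p ^ j * (1 - p) ^ (N - j) * ((j : ℝ) + m) = N * p + m := by
      have : ∀ j ∈ Finset.range (N + 1),
          (N.choose j : ℝ) * p ^ j * (1 - p) ^ (N - j) * ((j : ℝ) + m)
            = (N.choose j : ℝ) * p ^ j * (1 - p) ^ (N - j) * (j : ℝ)
              + (N.choose j : ℝ) * p ^ j * (1 - p) ^ (N - j) * m := fun j _ => by ring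
      rw [Finset.sum_congr rfl this, Finset.sum_add_distrib, wmean, ← Finset.sum_mul, wtotal]
      ring
    linarith
  have hWT_lb : 1 - e ≤ ∑ j ∈ Finset.Icc K N, (N.choose j : ℝ) * p ^ j * (1 - p) ^ (N - j) := by
    have hsplit : (∑ j ∈ Finset.range K, (N.choose j : ℝ) * p ^ j * (1 - p) ^ (N - j))
        + (∑ j ∈ Finset.Icc K N, (N.choose j : ℝ) * p ^ j * (1 - p) ^ (N - j))
          = ∑ j ∈ Finset.range (N + 1), (N.choose j : ℝ) * p ^ j * (1 - p) ^ (N - j) := by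
      rw [Finset.range_eq_Ico, Finset.range_eq_Ico, ← Finset.Ico_add_one_right_eq_Icc]
      exact Finset.sum_Ico_consecutive (fun j => (N.choose j : ℝ) * p ^ j * (1 - p) ^ (N - j)) (Nat.zero_le K) (by omega)
    have htot := wtotal N p
    have hch := chernoff N K p k (le_of_lt hp0) hp1 hN hk0 hKk1 hk.le
    rw [← hedef] at hch
    linarith
  -- combine
  have hmain : (∑ j ∈ Finset.Icc k N,
      (N.choose j : ℝ) * p ^ j * (1 - p) ^ (N - j) * Real.log ((j : ℝ) + m))
        / (∑ j ∈ Finset.Icc k N, (N.choose j : ℝ) * p ^ j * (1 - p) ^ (N - j))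
      ≤ Real.log ((N * p + m) / (1 - e)) := by
    rw [← hnum]
    set A := ∑ j ∈ Finset.Icc K N,
      (N.choose j : ℝ) * p ^ j * (1 - p) ^ (N - j) * Real.log ((j : ℝ) + m)
    set WT := ∑ j ∈ Finset.Icc K N, (N.choose j : ℝ) * p ^ j * (1 - p) ^ (N - j)
    set W := ∑ j ∈ Finset.Icc k N, (N.choose j : ℝ) * p ^ j * (1 - p) ^ (N - j)
    set ST := ∑ j ∈ Finset.Icc K N, (N.choose j : ℝ) * p ^ j * (1 - p) ^ (N - j) * ((j : ℝ) + m)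
    have hST_pos : 0 < ST := by
      apply Finset.sum_pos'
      · intro j hj
        exact mul_nonneg (hw j) (by linarith [hjm1 j hj])
      · exact ⟨N, hNmem, by nlinarith [hjm1 N hNmem]⟩
    have step_a : A / W ≤ A / WT := by
      rw [div_le_div_iff₀ hW hWT]
      nlinarith
    have step_b : Real.log (ST / WT) ≤ Real.log ((N * p + m) / (1 - e)) := by
      apply Real.log_le_log (by positivity)
      exact div_le_div₀ (by positivity) hST_le h1me hWT_lb
    exact step_a.trans (hjensen.trans step_b)
  -- rewrite RHS
  have hrhs : Real.log ((1 + (m : ℝ) / (N * p)) / (1 - e))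
      = Real.log ((N * p + m) / (1 - e)) - Real.log (N * p) := by
    have ha : (0:ℝ) < (N : ℝ) * p + m := by positivity
    have h1 : 1 + (m : ℝ) / (N * p) = ((N : ℝ) * p + m) / (N * p) := by
      field_simp
    rw [h1, div_div, Real.log_div ha.ne' (by positivity : (0:ℝ) < (N:ℝ) * p * (1 - e)).ne',
      Real.log_mul hNp.ne' h1me.ne', Real.log_div ha.ne' h1me.ne']
    ring
  rw [hrhs]
  linarith [hmain]
end
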